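/- arXiv:1803.09931 — 5 statements merged into one kernel-verified Lean document; each statement's English description precedes it below -/
import Mathlib

section
/- Let n ≥ 1, N ≥ 1, let r : ℂ×ℂ → M_{n²}(ℂ) satisfy the classical Yang–Baxter equation (for all λ,μ,ν), let τ : ℂ → ℂ, g^{(0)},…,g^{(N−1)} : ℂ → ℂ with g^{(0)} ≡ 1, and let k : ℂ → GL_n(ℂ) satisfy the N-reflection equation for all λ,ν. Define r̄_{ab}(λ,ν) = ∑_{j=0}^{N−1} g^{(j)}(ν)·k^{(j)}_b(ν)·r_{ab}(λ, τ^j(ν))·(k^{(j)}_b(ν))^{−1}. Then r̄ satisfies the classical Yang–Baxter equation: [r̄_{ab}(λ,μ), r̄_{ac}(λ,ν)] + [r̄_{ab}(λ,μ), r̄_{bc}(μ,ν)] − [r̄_{ac}(λ,ν), r̄_{cb}(ν,μ)] = 0 for all λ,μ,ν. -/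
open Matrix Kronecker

noncomputable section

/-- `x_a = x ⊗ 1`, acting on `ℂ^n ⊗ ℂ^n`. -/
def legA (n : ℕ) (x : Matrix (Fin n) (Fin n) ℂ) :
    Matrix (Fin n × Fin n) (Fin n × Fin n) ℂ :=
  x ⊗ₖ (1 : Matrix (Fin n) (Fin n) ℂ)

/-- `x_b = 1 ⊗ x`, acting on `ℂ^n ⊗ ℂ^n`. -/
def legB (n : ℕ) (x : Matrix (Fin n) (Fin n) ℂ) :
    Matrix (Fin n × Fin n) (Fin n × Fin n) ℂ :=
  (1 : Matrix (Fin n) (Fin n) ℂ) ⊗ₖ x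

/-- `k⁽ʲ⁾(ν) = k⁽ʲ⁻¹⁾(ν) · k(τʲ⁻¹(ν))`, with `k⁽⁰⁾ = 1`. -/
def kiter {n : ℕ} (k : ℂ → Matrix (Fin n) (Fin n) ℂ) (τ : ℂ → ℂ) :
    ℕ → ℂ → Matrix (Fin n) (Fin n) ℂ
  | 0, _ => 1
  | j + 1, ν => kiter k τ j ν * k (τ^[j] ν)

/-- `r̄_{ab}(λ,ν) = ∑_{j<N} g⁽ʲ⁾(ν) k⁽ʲ⁾_b(ν) r_{ab}(λ, τʲ(ν)) (k⁽ʲ⁾_b(ν))⁻¹`. -/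
def rbar (n N : ℕ) (r : ℂ → ℂ → Matrix (Fin n × Fin n) (Fin n × Fin n) ℂ)
    (τ : ℂ → ℂ) (g : ℕ → ℂ → ℂ) (k : ℂ → Matrix (Fin n) (Fin n) ℂ)
    (lam ν : ℂ) : Matrix (Fin n × Fin n) (Fin n × Fin n) ℂ :=
  ∑ j ∈ Finset.range N,
    g j ν • (legB n (kiter k τ j ν) * r lam (τ^[j] ν) * (legB n (kiter k τ j ν))⁻¹)

/-- The classical `N`-reflection equation. -/
def NRefl (n N : ℕ) (r : ℂ → ℂ → Matrix (Fin n × Fin n) (Fin n × Fin n) ℂ)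
    (τ : ℂ → ℂ) (g : ℕ → ℂ → ℂ) (k : ℂ → Matrix (Fin n) (Fin n) ℂ) : Prop :=
  ∀ lam ν : ℂ,
    rbar n N r τ g k lam ν * legA n (k lam) = legA n (k lam) * rbar n N r τ g k (τ lam) ν

/-- Embedding of an `n²×n²` matrix into legs `a,b` of `ℂ^n ⊗ ℂ^n ⊗ ℂ^n`. -/
def toAB (n : ℕ) (X : Matrix (Fin n × Fin n) (Fin n × Fin n) ℂ) :
    Matrix (Fin n × Fin n × Fin n) (Fin n × Fin n × Fin n) ℂ :=
  Matrix.of fun i j => X (i.1, i.2.1) (j.1, j.2.1) * (if i.2.2 = j.2.2 then 1 else 0)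

/-- Embedding into legs `a,c`. -/
def toAC (n : ℕ) (X : Matrix (Fin n × Fin n) (Fin n × Fin n) ℂ) :
    Matrix (Fin n × Fin n × Fin n) (Fin n × Fin n × Fin n) ℂ :=
  Matrix.of fun i j => X (i.1, i.2.2) (j.1, j.2.2) * (if i.2.1 = j.2.1 then 1 else 0)

/-- Embedding into legs `b,c`. -/
def toBC (n : ℕ) (X : Matrix (Fin n × Fin n) (Fin n × Fin n) ℂ) :
    Matrix (Fin n × Fin n × Fin n) (Fin n × Fin n × Fin n) ℂ :=
  Matrix.of fun i j => (if i.1 = j.1 then 1 else 0) * X (i.2.1, i.2.2) (j.2.1, j.2.2)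

/-- Embedding into legs `c,b` (the leg-swap of `toBC`). -/
def toCB (n : ℕ) (X : Matrix (Fin n × Fin n) (Fin n × Fin n) ℂ) :
    Matrix (Fin n × Fin n × Fin n) (Fin n × Fin n × Fin n) ℂ :=
  Matrix.of fun i j => (if i.1 = j.1 then 1 else 0) * X (i.2.2, i.2.1) (j.2.2, j.2.1)

/-- The classical Yang-Baxter equation
`[X_{ab}(λ,μ), X_{ac}(λ,ν)] + [X_{ab}(λ,μ), X_{bc}(μ,ν)] - [X_{ac}(λ,ν), X_{cb}(ν,μ)] = 0`. -/
def CYBE (n : ℕ) (X : ℂ → ℂ → Matrix (Fin n × Fin n) (Fin n × Fin n) ℂ) : Prop :=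
  ∀ lam mu ν : ℂ,
    (toAB n (X lam mu) * toAC n (X lam ν) - toAC n (X lam ν) * toAB n (X lam mu))
      + (toAB n (X lam mu) * toBC n (X mu ν) - toBC n (X mu ν) * toAB n (X lam mu))
      - (toAC n (X lam ν) * toCB n (X ν mu) - toCB n (X ν mu) * toAC n (X lam ν)) = 0

section helpers
variable {ι : Type*} [Fintype ι] [DecidableEq ι]

lemma unit_mul_inv {A : Matrix ι ι ℂ} (h : IsUnit A) : A * A⁻¹ = 1 :=
  Matrix.mul_nonsing_inv A ((Matrix.isUnit_iff_isUnit_det A).mp h)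

lemma unit_inv_mul {A : Matrix ι ι ℂ} (h : IsUnit A) : A⁻¹ * A = 1 :=
  Matrix.nonsing_inv_mul A ((Matrix.isUnit_iff_isUnit_det A).mp h)

lemma inv_comm_right {P Q : Matrix ι ι ℂ} (hP : IsUnit P) (h : P * Q = Q * P) :
    P⁻¹ * Q = Q * P⁻¹ := by
  have h1 := unit_mul_inv hP
  have h2 := unit_inv_mul hP
  calc P⁻¹ * Q = P⁻¹ * Q * (P * P⁻¹) := by rw [h1, mul_one]
    _ = P⁻¹ * (Q * P) * P⁻¹ := by simp only [mul_assoc]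
    _ = P⁻¹ * (P * Q) * P⁻¹ := by rw [← h]
    _ = Q * P⁻¹ := by simp only [← mul_assoc]; rw [h2, one_mul]

lemma comm_assoc {P Q : Matrix ι ι ℂ} (h : P * Q = Q * P) (w : Matrix ι ι ℂ) :
    P * (Q * w) = Q * (P * w) := by rw [← mul_assoc, h, mul_assoc]

lemma conj_commutator {B C X Z : Matrix ι ι ℂ} (hB : IsUnit B) (hC : IsUnit C)
    (hBC : B * C = C * B) (hBZ : B * Z = Z * B) (hCX : C * X = X * C) :
    (B * X * B⁻¹) * (C * Z * C⁻¹) - (C * Z * C⁻¹) * (B * X * B⁻¹)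
      = B * (C * (X * Z - Z * X) * C⁻¹) * B⁻¹ := by
  have hBiC : B⁻¹ * C = C * B⁻¹ := inv_comm_right hB hBC
  have hBiZ : B⁻¹ * Z = Z * B⁻¹ := inv_comm_right hB hBZ
  have hCiX : C⁻¹ * X = X * C⁻¹ := inv_comm_right hC hCX
  have hCiBi : C⁻¹ * B⁻¹ = B⁻¹ * C⁻¹ := inv_comm_right hC hBiC.symm
  have hCiB : C⁻¹ * B = B * C⁻¹ := inv_comm_right hC hBC.symm
  have h1 : (B * X * B⁻¹) * (C * Z * C⁻¹) = B * (C * (X * Z) * C⁻¹) * B⁻¹ := by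
    simp only [mul_assoc]
    rw [comm_assoc hBiC, comm_assoc hBiZ, comm_assoc hCX.symm, hCiBi.symm]
  have h2 : (C * Z * C⁻¹) * (B * X * B⁻¹) = B * (C * (Z * X) * C⁻¹) * B⁻¹ := by
    simp only [mul_assoc]
    rw [comm_assoc hCiB, comm_assoc hCiX, comm_assoc hBZ.symm, comm_assoc hBC.symm]
  rw [h1, h2]
  simp only [mul_sub, sub_mul]

lemma conj_commutator_same {B X Q : Matrix ι ι ℂ} (hB : IsUnit B) :
    (B * X * B⁻¹) * (B * Q * B⁻¹) - (B * Q * B⁻¹) * (B * X * B⁻¹)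
      = B * (X * Q - Q * X) * B⁻¹ := by
  have h2 := unit_inv_mul hB
  have key : ∀ w : Matrix ι ι ℂ, B⁻¹ * (B * w) = w := fun w => by
    rw [← mul_assoc, h2, one_mul]
  have h1 : ∀ U V : Matrix ι ι ℂ, (B * U * B⁻¹) * (B * V * B⁻¹) = B * (U * V) * B⁻¹ := by
    intro U V
    simp only [mul_assoc]
    rw [key]
  rw [h1, h1]
  simp only [mul_sub, sub_mul]

lemma conj_commutator_left {C X Y : Matrix ι ι ℂ} (hC : IsUnit C) (hCX : C * X = X * C) :
    X * (C * Y * C⁻¹) - (C * Y * C⁻¹) * X = C * (X * Y - Y * X) * C⁻¹ := by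
  have hCiX : C⁻¹ * X = X * C⁻¹ := inv_comm_right hC hCX
  have h1 : X * (C * Y * C⁻¹) = C * (X * Y) * C⁻¹ := by
    simp only [mul_assoc]; rw [comm_assoc hCX.symm]
  have h2 : (C * Y * C⁻¹) * X = C * (Y * X) * C⁻¹ := by
    simp only [mul_assoc]; rw [hCiX]
  rw [h1, h2]
  simp only [mul_sub, sub_mul]

lemma conj_swap {B C D : Matrix ι ι ℂ} (hB : IsUnit B) (hC : IsUnit C)
    (hBC : B * C = C * B) :
    C * (B * D * B⁻¹) * C⁻¹ = B * (C * D * C⁻¹) * B⁻¹ := by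
  have hBiC : B⁻¹ * C = C * B⁻¹ := inv_comm_right hB hBC
  have hBiCi : C⁻¹ * B⁻¹ = B⁻¹ * C⁻¹ := inv_comm_right hC hBiC.symm
  simp only [mul_assoc]
  rw [comm_assoc hBC.symm, ← hBiCi]

end helpers
-- embedding lemmas
set_option linter.unusedSectionVars false

section emb
variable {n : ℕ}

/-- Equiv pairing legs `(a,b)|c`. -/
def eAB (n : ℕ) : (Fin n × Fin n) × Fin n ≃ Fin n × Fin n × Fin n :=
  Equiv.prodAssoc _ _ _

/-- Equiv pairing legs `(a,c)|b`. -/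
def eAC (n : ℕ) : (Fin n × Fin n) × Fin n ≃ Fin n × Fin n × Fin n where
  toFun p := (p.1.1, p.2, p.1.2)
  invFun p := ((p.1, p.2.2), p.2.1)
  left_inv p := rfl
  right_inv p := rfl

lemma kron_submatrix_mul {ι κ ω : Type*} [Fintype ι] [Fintype κ] [Fintype ω]
    [DecidableEq ι] [DecidableEq κ] [DecidableEq ω] (e : ι × κ ≃ ω)
    (A C : Matrix ι ι ℂ) (B D : Matrix κ κ ℂ) :
    (A ⊗ₖ B).submatrix e.symm e.symm * (C ⊗ₖ D).submatrix e.symm e.symm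
      = ((A * C) ⊗ₖ (B * D)).submatrix e.symm e.symm := by
  rw [Matrix.submatrix_mul_equiv, ← Matrix.mul_kronecker_mul]

lemma toAB_rep (X : Matrix (Fin n × Fin n) (Fin n × Fin n) ℂ) :
    toAB n X = (X ⊗ₖ (1 : Matrix (Fin n) (Fin n) ℂ)).submatrix (eAB n).symm (eAB n).symm := by
  ext ⟨i1, i2, i3⟩ ⟨j1, j2, j3⟩
  simp [toAB, eAB, Matrix.one_apply]

lemma toAC_rep (X : Matrix (Fin n × Fin n) (Fin n × Fin n) ℂ) :
    toAC n X = (X ⊗ₖ (1 : Matrix (Fin n) (Fin n) ℂ)).submatrix (eAC n).symm (eAC n).symm := by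
  ext ⟨i1, i2, i3⟩ ⟨j1, j2, j3⟩
  simp [toAC, eAC, Matrix.one_apply, Equiv.symm, Equiv.coe_fn_mk]

lemma toBC_rep (X : Matrix (Fin n × Fin n) (Fin n × Fin n) ℂ) :
    toBC n X = (1 : Matrix (Fin n) (Fin n) ℂ) ⊗ₖ X := by
  ext ⟨i1, i2, i3⟩ ⟨j1, j2, j3⟩
  simp [toBC, Matrix.one_apply]

/-- swap of the two factors of a 2-leg matrix -/
def sw (n : ℕ) (X : Matrix (Fin n × Fin n) (Fin n × Fin n) ℂ) :
    Matrix (Fin n × Fin n) (Fin n × Fin n) ℂ :=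
  X.submatrix (Equiv.prodComm (Fin n) (Fin n)) (Equiv.prodComm (Fin n) (Fin n))

lemma toCB_rep (X : Matrix (Fin n × Fin n) (Fin n × Fin n) ℂ) :
    toCB n X = (1 : Matrix (Fin n) (Fin n) ℂ) ⊗ₖ sw n X := by
  ext ⟨i1, i2, i3⟩ ⟨j1, j2, j3⟩
  simp [toCB, sw, Matrix.one_apply]

lemma sw_mul (X Y : Matrix (Fin n × Fin n) (Fin n × Fin n) ℂ) :
    sw n (X * Y) = sw n X * sw n Y := by
  unfold sw
  rw [Matrix.submatrix_mul_equiv]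

lemma sw_one : sw n (1 : Matrix (Fin n × Fin n) (Fin n × Fin n) ℂ) = 1 := by
  unfold sw
  exact Matrix.submatrix_one_equiv _

lemma toAB_mul (X Y : Matrix (Fin n × Fin n) (Fin n × Fin n) ℂ) :
    toAB n (X * Y) = toAB n X * toAB n Y := by
  rw [toAB_rep, toAB_rep, toAB_rep, kron_submatrix_mul, one_mul]

lemma toAC_mul (X Y : Matrix (Fin n × Fin n) (Fin n × Fin n) ℂ) :
    toAC n (X * Y) = toAC n X * toAC n Y := by
  rw [toAC_rep, toAC_rep, toAC_rep, kron_submatrix_mul, one_mul]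

lemma toBC_mul (X Y : Matrix (Fin n × Fin n) (Fin n × Fin n) ℂ) :
    toBC n (X * Y) = toBC n X * toBC n Y := by
  rw [toBC_rep, toBC_rep, toBC_rep, ← Matrix.mul_kronecker_mul, one_mul]

lemma toCB_mul (X Y : Matrix (Fin n × Fin n) (Fin n × Fin n) ℂ) :
    toCB n (X * Y) = toCB n X * toCB n Y := by
  rw [toCB_rep, toCB_rep, toCB_rep, ← Matrix.mul_kronecker_mul, one_mul, sw_mul]

lemma toAB_one : toAB n (1 : Matrix (Fin n × Fin n) (Fin n × Fin n) ℂ) = 1 := by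
  rw [toAB_rep, Matrix.one_kronecker_one, Matrix.submatrix_one_equiv]

lemma toAC_one : toAC n (1 : Matrix (Fin n × Fin n) (Fin n × Fin n) ℂ) = 1 := by
  rw [toAC_rep, Matrix.one_kronecker_one, Matrix.submatrix_one_equiv]

lemma toBC_one : toBC n (1 : Matrix (Fin n × Fin n) (Fin n × Fin n) ℂ) = 1 := by
  rw [toBC_rep, Matrix.one_kronecker_one]

lemma toCB_one : toCB n (1 : Matrix (Fin n × Fin n) (Fin n × Fin n) ℂ) = 1 := by
  rw [toCB_rep, sw_one, Matrix.one_kronecker_one]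

end emb
section emb2
variable {n : ℕ}

lemma toAB_smul (a : ℂ) (X : Matrix (Fin n × Fin n) (Fin n × Fin n) ℂ) :
    toAB n (a • X) = a • toAB n X := by
  ext ⟨i1, i2, i3⟩ ⟨j1, j2, j3⟩
  simp [toAB, Matrix.smul_apply, smul_eq_mul, mul_assoc]

lemma toAC_smul (a : ℂ) (X : Matrix (Fin n × Fin n) (Fin n × Fin n) ℂ) :
    toAC n (a • X) = a • toAC n X := by
  ext ⟨i1, i2, i3⟩ ⟨j1, j2, j3⟩
  simp [toAC, Matrix.smul_apply, smul_eq_mul, mul_assoc]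

lemma toBC_smul (a : ℂ) (X : Matrix (Fin n × Fin n) (Fin n × Fin n) ℂ) :
    toBC n (a • X) = a • toBC n X := by
  ext ⟨i1, i2, i3⟩ ⟨j1, j2, j3⟩
  simp [toBC, Matrix.smul_apply, smul_eq_mul]

lemma toCB_smul (a : ℂ) (X : Matrix (Fin n × Fin n) (Fin n × Fin n) ℂ) :
    toCB n (a • X) = a • toCB n X := by
  ext ⟨i1, i2, i3⟩ ⟨j1, j2, j3⟩
  simp [toCB, Matrix.smul_apply, smul_eq_mul]

lemma toAB_sum {α : Type*} (s : Finset α) (f : α → Matrix (Fin n × Fin n) (Fin n × Fin n) ℂ) :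
    toAB n (∑ j ∈ s, f j) = ∑ j ∈ s, toAB n (f j) := by
  ext ⟨i1, i2, i3⟩ ⟨j1, j2, j3⟩
  simp [toAB, Matrix.sum_apply, Finset.sum_mul]

lemma toAC_sum {α : Type*} (s : Finset α) (f : α → Matrix (Fin n × Fin n) (Fin n × Fin n) ℂ) :
    toAC n (∑ j ∈ s, f j) = ∑ j ∈ s, toAC n (f j) := by
  ext ⟨i1, i2, i3⟩ ⟨j1, j2, j3⟩
  simp [toAC, Matrix.sum_apply, Finset.sum_mul]

lemma toBC_sum {α : Type*} (s : Finset α) (f : α → Matrix (Fin n × Fin n) (Fin n × Fin n) ℂ) :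
    toBC n (∑ j ∈ s, f j) = ∑ j ∈ s, toBC n (f j) := by
  ext ⟨i1, i2, i3⟩ ⟨j1, j2, j3⟩
  simp [toBC, Matrix.sum_apply, Finset.mul_sum]

lemma toCB_sum {α : Type*} (s : Finset α) (f : α → Matrix (Fin n × Fin n) (Fin n × Fin n) ℂ) :
    toCB n (∑ j ∈ s, f j) = ∑ j ∈ s, toCB n (f j) := by
  ext ⟨i1, i2, i3⟩ ⟨j1, j2, j3⟩
  simp [toCB, Matrix.sum_apply, Finset.mul_sum]

-- inverses and units through embeddings
lemma toAB_isUnit {U : Matrix (Fin n × Fin n) (Fin n × Fin n) ℂ} (h : IsUnit U) :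
    IsUnit (toAB n U) :=
  isUnit_iff_exists.mpr ⟨toAB n U⁻¹,
    by rw [← toAB_mul, unit_mul_inv h, toAB_one],
    by rw [← toAB_mul, unit_inv_mul h, toAB_one]⟩

lemma toAB_inv {U : Matrix (Fin n × Fin n) (Fin n × Fin n) ℂ} (h : IsUnit U) :
    toAB n U⁻¹ = (toAB n U)⁻¹ :=
  (Matrix.inv_eq_right_inv (by rw [← toAB_mul, unit_mul_inv h, toAB_one])).symm

lemma toAC_isUnit {U : Matrix (Fin n × Fin n) (Fin n × Fin n) ℂ} (h : IsUnit U) :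
    IsUnit (toAC n U) :=
  isUnit_iff_exists.mpr ⟨toAC n U⁻¹,
    by rw [← toAC_mul, unit_mul_inv h, toAC_one],
    by rw [← toAC_mul, unit_inv_mul h, toAC_one]⟩

lemma toAC_inv {U : Matrix (Fin n × Fin n) (Fin n × Fin n) ℂ} (h : IsUnit U) :
    toAC n U⁻¹ = (toAC n U)⁻¹ :=
  (Matrix.inv_eq_right_inv (by rw [← toAC_mul, unit_mul_inv h, toAC_one])).symm

lemma toBC_isUnit {U : Matrix (Fin n × Fin n) (Fin n × Fin n) ℂ} (h : IsUnit U) :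
    IsUnit (toBC n U) :=
  isUnit_iff_exists.mpr ⟨toBC n U⁻¹,
    by rw [← toBC_mul, unit_mul_inv h, toBC_one],
    by rw [← toBC_mul, unit_inv_mul h, toBC_one]⟩

lemma toBC_inv {U : Matrix (Fin n × Fin n) (Fin n × Fin n) ℂ} (h : IsUnit U) :
    toBC n U⁻¹ = (toBC n U)⁻¹ :=
  (Matrix.inv_eq_right_inv (by rw [← toBC_mul, unit_mul_inv h, toBC_one])).symm

lemma toCB_isUnit {U : Matrix (Fin n × Fin n) (Fin n × Fin n) ℂ} (h : IsUnit U) :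
    IsUnit (toCB n U) :=
  isUnit_iff_exists.mpr ⟨toCB n U⁻¹,
    by rw [← toCB_mul, unit_mul_inv h, toCB_one],
    by rw [← toCB_mul, unit_inv_mul h, toCB_one]⟩

lemma toCB_inv {U : Matrix (Fin n × Fin n) (Fin n × Fin n) ℂ} (h : IsUnit U) :
    toCB n U⁻¹ = (toCB n U)⁻¹ :=
  (Matrix.inv_eq_right_inv (by rw [← toCB_mul, unit_mul_inv h, toCB_one])).symm

-- legA/legB lemmas
lemma legA_mul (x y : Matrix (Fin n) (Fin n) ℂ) : legA n (x * y) = legA n x * legA n y := by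
  unfold legA
  rw [← Matrix.mul_kronecker_mul, one_mul]

lemma legA_one : legA n (1 : Matrix (Fin n) (Fin n) ℂ) = 1 := Matrix.one_kronecker_one

lemma legB_mul (x y : Matrix (Fin n) (Fin n) ℂ) : legB n (x * y) = legB n x * legB n y := by
  unfold legB
  rw [← Matrix.mul_kronecker_mul, one_mul]

lemma legB_one : legB n (1 : Matrix (Fin n) (Fin n) ℂ) = 1 := Matrix.one_kronecker_one

lemma unit_mul_inv1 {A : Matrix (Fin n) (Fin n) ℂ} (h : IsUnit A) : A * A⁻¹ = 1 :=
  unit_mul_inv h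

lemma legB_isUnit {x : Matrix (Fin n) (Fin n) ℂ} (h : IsUnit x) : IsUnit (legB n x) :=
  isUnit_iff_exists.mpr ⟨legB n x⁻¹,
    by rw [← legB_mul, unit_mul_inv h, legB_one],
    by rw [← legB_mul, unit_inv_mul h, legB_one]⟩

lemma kiter_isUnit {k : ℂ → Matrix (Fin n) (Fin n) ℂ} {τ : ℂ → ℂ}
    (hk : ∀ ν : ℂ, IsUnit (k ν)) (j : ℕ) (ν : ℂ) : IsUnit (kiter k τ j ν) := by
  induction j with
  | zero => exact isUnit_one
  | succ j ih => exact ih.mul (hk _)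

end emb2
section emb3
variable {n : ℕ}

/-- `1 ⊗ y ⊗ 1` on three legs. -/
def Lb (n : ℕ) (y : Matrix (Fin n) (Fin n) ℂ) : Matrix (Fin n × Fin n × Fin n) (Fin n × Fin n × Fin n) ℂ :=
  toAB n (legB n y)

/-- `1 ⊗ 1 ⊗ z` on three legs. -/
def Lc (n : ℕ) (z : Matrix (Fin n) (Fin n) ℂ) : Matrix (Fin n × Fin n × Fin n) (Fin n × Fin n × Fin n) ℂ :=
  toBC n (legB n z)

lemma toBC_legA (x : Matrix (Fin n) (Fin n) ℂ) : toBC n (legA n x) = Lb n x := by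
  ext ⟨i1, i2, i3⟩ ⟨j1, j2, j3⟩
  simp [toBC, toAB, Lb, legA, legB, Matrix.one_apply]

lemma toCB_legA (x : Matrix (Fin n) (Fin n) ℂ) : toCB n (legA n x) = Lc n x := by
  ext ⟨i1, i2, i3⟩ ⟨j1, j2, j3⟩
  simp [toCB, toBC, Lc, legA, legB, Matrix.one_apply]

lemma toAC_legB (z : Matrix (Fin n) (Fin n) ℂ) : toAC n (legB n z) = Lc n z := by
  ext ⟨i1, i2, i3⟩ ⟨j1, j2, j3⟩
  simp [toAC, toBC, Lc, legB, Matrix.one_apply]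

lemma toCB_legB (y : Matrix (Fin n) (Fin n) ℂ) : toCB n (legB n y) = Lb n y := by
  ext ⟨i1, i2, i3⟩ ⟨j1, j2, j3⟩
  simp [toCB, toAB, Lb, legB, Matrix.one_apply]

lemma Lb_isUnit {y : Matrix (Fin n) (Fin n) ℂ} (h : IsUnit y) : IsUnit (Lb n y) :=
  toAB_isUnit (legB_isUnit h)

lemma Lc_isUnit {z : Matrix (Fin n) (Fin n) ℂ} (h : IsUnit z) : IsUnit (Lc n z) :=
  toBC_isUnit (legB_isUnit h)

-- representation of Lc via eAB and Lb via eAC, for commutation lemmas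
lemma Lc_rep_AB (z : Matrix (Fin n) (Fin n) ℂ) :
    Lc n z = ((1 : Matrix (Fin n × Fin n) (Fin n × Fin n) ℂ) ⊗ₖ z).submatrix
      (eAB n).symm (eAB n).symm := by
  ext ⟨i1, i2, i3⟩ ⟨j1, j2, j3⟩
  simp [Lc, toBC, legB, eAB, Matrix.one_apply, Prod.ext_iff, ite_and]
  split_ifs <;> ring

lemma Lb_rep_AC (y : Matrix (Fin n) (Fin n) ℂ) :
    Lb n y = ((1 : Matrix (Fin n × Fin n) (Fin n × Fin n) ℂ) ⊗ₖ y).submatrix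
      (eAC n).symm (eAC n).symm := by
  ext ⟨i1, i2, i3⟩ ⟨j1, j2, j3⟩
  simp [Lb, toAB, legB, eAC, Equiv.symm, Equiv.coe_fn_mk, Matrix.one_apply, Prod.ext_iff, ite_and]
  split_ifs <;> ring

lemma Lc_comm_toAB (z : Matrix (Fin n) (Fin n) ℂ)
    (X : Matrix (Fin n × Fin n) (Fin n × Fin n) ℂ) :
    Lc n z * toAB n X = toAB n X * Lc n z := by
  rw [Lc_rep_AB, toAB_rep, kron_submatrix_mul, kron_submatrix_mul,
    one_mul, mul_one, one_mul, mul_one]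

lemma Lb_comm_toAC (y : Matrix (Fin n) (Fin n) ℂ)
    (Z : Matrix (Fin n × Fin n) (Fin n × Fin n) ℂ) :
    Lb n y * toAC n Z = toAC n Z * Lb n y := by
  rw [Lb_rep_AC, toAC_rep, kron_submatrix_mul, kron_submatrix_mul,
    one_mul, mul_one, one_mul, mul_one]

lemma Lb_comm_Lc (y z : Matrix (Fin n) (Fin n) ℂ) :
    Lb n y * Lc n z = Lc n z * Lb n y :=
  (Lc_comm_toAB z (legB n y)).symm

end emb3
lemma refl_iter {n N : ℕ} {r : ℂ → ℂ → Matrix (Fin n × Fin n) (Fin n × Fin n) ℂ}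
    {τ : ℂ → ℂ} {g : ℕ → ℂ → ℂ} {k : ℂ → Matrix (Fin n) (Fin n) ℂ}
    (hrefl : NRefl n N r τ g k) (j : ℕ) (lam ν : ℂ) :
    rbar n N r τ g k lam ν * legA n (kiter k τ j lam)
      = legA n (kiter k τ j lam) * rbar n N r τ g k (τ^[j] lam) ν := by
  induction j with
  | zero => simp [kiter, legA_one]
  | succ j ih =>
    have hk1 : kiter k τ (j + 1) lam = kiter k τ j lam * k (τ^[j] lam) := rfl
    rw [hk1, legA_mul, ← mul_assoc, ih, mul_assoc, hrefl (τ^[j] lam) ν, ← mul_assoc,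
      ← Function.iterate_succ_apply' τ j lam]
set_option maxHeartbeats 1600000 in
/-- If `r` solves the classical Yang-Baxter equation and `k` solves the `N`-reflection
equation, then `r̄` solves the classical Yang-Baxter equation. -/
theorem stmt2 (n N : ℕ) (hn : 1 ≤ n) (hN : 1 ≤ N)
    (r : ℂ → ℂ → Matrix (Fin n × Fin n) (Fin n × Fin n) ℂ) (hr : CYBE n r)
    (τ : ℂ → ℂ) (g : ℕ → ℂ → ℂ) (hg0 : ∀ ν : ℂ, g 0 ν = 1)
    (k : ℂ → Matrix (Fin n) (Fin n) ℂ) (hk : ∀ ν : ℂ, IsUnit (k ν))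
    (hrefl : NRefl n N r τ g k) :
    CYBE n (rbar n N r τ g k) := by
  intro lam mu ν
  have hKb : ∀ j : ℕ, IsUnit (legB n (kiter k τ j mu)) :=
    fun j => legB_isUnit (kiter_isUnit hk j mu)
  have hKc : ∀ m : ℕ, IsUnit (legB n (kiter k τ m ν)) :=
    fun m => legB_isUnit (kiter_isUnit hk m ν)
  have hB : ∀ j : ℕ, IsUnit (Lb n (kiter k τ j mu)) :=
    fun j => Lb_isUnit (kiter_isUnit hk j mu)
  have hC : ∀ m : ℕ, IsUnit (Lc n (kiter k τ m ν)) :=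
    fun m => Lc_isUnit (kiter_isUnit hk m ν)
  -- expansions of the four embedded r̄'s
  have hAB : toAB n (rbar n N r τ g k lam mu)
      = ∑ j ∈ Finset.range N, g j mu •
        (Lb n (kiter k τ j mu) * toAB n (r lam (τ^[j] mu)) * (Lb n (kiter k τ j mu))⁻¹) := by
    unfold rbar
    rw [toAB_sum]
    refine Finset.sum_congr rfl fun j _ => ?_
    rw [toAB_smul, toAB_mul, toAB_mul, toAB_inv (hKb j)]
    rfl
  have hAC : toAC n (rbar n N r τ g k lam ν)
      = ∑ m ∈ Finset.range N, g m ν •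
        (Lc n (kiter k τ m ν) * toAC n (r lam (τ^[m] ν)) * (Lc n (kiter k τ m ν))⁻¹) := by
    unfold rbar
    rw [toAC_sum]
    refine Finset.sum_congr rfl fun m _ => ?_
    rw [toAC_smul, toAC_mul, toAC_mul, toAC_inv (hKc m), toAC_legB]
  have hBCx : ∀ lam' : ℂ, toBC n (rbar n N r τ g k lam' ν)
      = ∑ m ∈ Finset.range N, g m ν •
        (Lc n (kiter k τ m ν) * toBC n (r lam' (τ^[m] ν)) * (Lc n (kiter k τ m ν))⁻¹) := by
    intro lam'
    unfold rbar
    rw [toBC_sum]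
    refine Finset.sum_congr rfl fun m _ => ?_
    rw [toBC_smul, toBC_mul, toBC_mul, toBC_inv (hKc m)]
    rfl
  have hCBx : ∀ ν' : ℂ, toCB n (rbar n N r τ g k ν' mu)
      = ∑ j ∈ Finset.range N, g j mu •
        (Lb n (kiter k τ j mu) * toCB n (r ν' (τ^[j] mu)) * (Lb n (kiter k τ j mu))⁻¹) := by
    intro ν'
    unfold rbar
    rw [toCB_sum]
    refine Finset.sum_congr rfl fun j _ => ?_
    rw [toCB_smul, toCB_mul, toCB_mul, toCB_inv (hKb j), toCB_legB]
  -- reflection pushed to three legs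
  have hEB : ∀ j : ℕ, toBC n (rbar n N r τ g k mu ν)
      = Lb n (kiter k τ j mu) * toBC n (rbar n N r τ g k (τ^[j] mu) ν)
          * (Lb n (kiter k τ j mu))⁻¹ := by
    intro j
    have h := congrArg (toBC n) (refl_iter hrefl j mu ν)
    rw [toBC_mul, toBC_mul, toBC_legA] at h
    calc toBC n (rbar n N r τ g k mu ν)
        = toBC n (rbar n N r τ g k mu ν)
            * (Lb n (kiter k τ j mu) * (Lb n (kiter k τ j mu))⁻¹) := by
          rw [unit_mul_inv (hB j), mul_one]
      _ = (toBC n (rbar n N r τ g k mu ν) * Lb n (kiter k τ j mu))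
            * (Lb n (kiter k τ j mu))⁻¹ := by rw [mul_assoc]
      _ = Lb n (kiter k τ j mu) * toBC n (rbar n N r τ g k (τ^[j] mu) ν)
            * (Lb n (kiter k τ j mu))⁻¹ := by rw [h]
  have hEC : ∀ m : ℕ, toCB n (rbar n N r τ g k ν mu)
      = Lc n (kiter k τ m ν) * toCB n (rbar n N r τ g k (τ^[m] ν) mu)
          * (Lc n (kiter k τ m ν))⁻¹ := by
    intro m
    have h := congrArg (toCB n) (refl_iter hrefl m ν mu)
    rw [toCB_mul, toCB_mul, toCB_legA] at h
    calc toCB n (rbar n N r τ g k ν mu)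
        = toCB n (rbar n N r τ g k ν mu)
            * (Lc n (kiter k τ m ν) * (Lc n (kiter k τ m ν))⁻¹) := by
          rw [unit_mul_inv (hC m), mul_one]
      _ = (toCB n (rbar n N r τ g k ν mu) * Lc n (kiter k τ m ν))
            * (Lc n (kiter k τ m ν))⁻¹ := by rw [mul_assoc]
      _ = Lc n (kiter k τ m ν) * toCB n (rbar n N r τ g k (τ^[m] ν) mu)
            * (Lc n (kiter k τ m ν))⁻¹ := by rw [h]
  -- the three double-sum identities
  have L1 : toAB n (rbar n N r τ g k lam mu) * toAC n (rbar n N r τ g k lam ν)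
      - toAC n (rbar n N r τ g k lam ν) * toAB n (rbar n N r τ g k lam mu)
      = ∑ j ∈ Finset.range N, ∑ m ∈ Finset.range N, (g j mu * g m ν) •
        (Lb n (kiter k τ j mu) * (Lc n (kiter k τ m ν) *
          (toAB n (r lam (τ^[j] mu)) * toAC n (r lam (τ^[m] ν))
            - toAC n (r lam (τ^[m] ν)) * toAB n (r lam (τ^[j] mu))) *
          (Lc n (kiter k τ m ν))⁻¹) * (Lb n (kiter k τ j mu))⁻¹) := by
    rw [hAB, Finset.sum_mul, Finset.mul_sum, ← Finset.sum_sub_distrib]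
    refine Finset.sum_congr rfl fun j _ => ?_
    rw [hAC, smul_mul_assoc, mul_smul_comm, ← smul_sub,
      Finset.mul_sum, Finset.sum_mul, ← Finset.sum_sub_distrib, Finset.smul_sum]
    refine Finset.sum_congr rfl fun m _ => ?_
    rw [mul_smul_comm, smul_mul_assoc, ← smul_sub, smul_smul,
      conj_commutator (hB j) (hC m) (Lb_comm_Lc _ _) (Lb_comm_toAC _ _) (Lc_comm_toAB _ _)]
  have L2 : toAB n (rbar n N r τ g k lam mu) * toBC n (rbar n N r τ g k mu ν)
      - toBC n (rbar n N r τ g k mu ν) * toAB n (rbar n N r τ g k lam mu)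
      = ∑ j ∈ Finset.range N, ∑ m ∈ Finset.range N, (g j mu * g m ν) •
        (Lb n (kiter k τ j mu) * (Lc n (kiter k τ m ν) *
          (toAB n (r lam (τ^[j] mu)) * toBC n (r (τ^[j] mu) (τ^[m] ν))
            - toBC n (r (τ^[j] mu) (τ^[m] ν)) * toAB n (r lam (τ^[j] mu))) *
          (Lc n (kiter k τ m ν))⁻¹) * (Lb n (kiter k τ j mu))⁻¹) := by
    rw [hAB, Finset.sum_mul, Finset.mul_sum, ← Finset.sum_sub_distrib]
    refine Finset.sum_congr rfl fun j _ => ?_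
    rw [hEB j, smul_mul_assoc, mul_smul_comm, ← smul_sub,
      conj_commutator_same (hB j), hBCx (τ^[j] mu),
      Finset.mul_sum, Finset.sum_mul, ← Finset.sum_sub_distrib,
      Finset.mul_sum, Finset.sum_mul, Finset.smul_sum]
    refine Finset.sum_congr rfl fun m _ => ?_
    rw [mul_smul_comm, smul_mul_assoc, ← smul_sub, mul_smul_comm, smul_mul_assoc, smul_smul,
      conj_commutator_left (hC m) (Lc_comm_toAB _ _)]
  have L3 : toAC n (rbar n N r τ g k lam ν) * toCB n (rbar n N r τ g k ν mu)
      - toCB n (rbar n N r τ g k ν mu) * toAC n (rbar n N r τ g k lam ν)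
      = ∑ j ∈ Finset.range N, ∑ m ∈ Finset.range N, (g j mu * g m ν) •
        (Lb n (kiter k τ j mu) * (Lc n (kiter k τ m ν) *
          (toAC n (r lam (τ^[m] ν)) * toCB n (r (τ^[m] ν) (τ^[j] mu))
            - toCB n (r (τ^[m] ν) (τ^[j] mu)) * toAC n (r lam (τ^[m] ν))) *
          (Lc n (kiter k τ m ν))⁻¹) * (Lb n (kiter k τ j mu))⁻¹) := by
    rw [hAC, Finset.sum_mul, Finset.mul_sum, ← Finset.sum_sub_distrib, Finset.sum_comm]
    refine Finset.sum_congr rfl fun m _ => ?_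
    rw [hEC m, smul_mul_assoc, mul_smul_comm, ← smul_sub,
      conj_commutator_same (hC m), hCBx (τ^[m] ν),
      Finset.mul_sum, Finset.sum_mul, ← Finset.sum_sub_distrib,
      Finset.mul_sum, Finset.sum_mul, Finset.smul_sum]
    refine Finset.sum_congr rfl fun j _ => ?_
    rw [mul_smul_comm, smul_mul_assoc, ← smul_sub, mul_smul_comm, smul_mul_assoc, smul_smul,
      conj_commutator_left (hB j) (Lb_comm_toAC _ _),
      conj_swap (hB j) (hC m) (Lb_comm_Lc _ _), mul_comm (g m ν) (g j mu)]
  rw [L1, L2, L3, ← Finset.sum_add_distrib, ← Finset.sum_sub_distrib]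
  refine Finset.sum_eq_zero fun j _ => ?_
  rw [← Finset.sum_add_distrib, ← Finset.sum_sub_distrib]
  refine Finset.sum_eq_zero fun m _ => ?_
  rw [← smul_add, ← smul_sub]
  have hcyb := sub_eq_zero.mp (hr lam (τ^[j] mu) (τ^[m] ν))
  rw [← hcyb]
  simp only [mul_add, add_mul, smul_add]
  simp
end
end

section
/- Let n ≥ 1, N ≥ 1, τ : ℂ → ℂ, and g^{(0)},…,g^{(N−1)} : ℂ → ℂ with g^{(0)} ≡ 1, and let r_{ab}(λ,μ) = P/(λ−μ) be the rational r-matrix. Fix λ,ν ∈ ℂ such that λ ≠ τ^j(ν) and τ(λ) ≠ τ^j(ν) for all j ∈ {0,…,N−1}. Then the identity matrix k(ν) = 1_n satisfies the N-reflection equation at (λ,ν) if and only if the scalar functional equation ∑_{j=0}^{N−1} g^{(j)}(ν)/(λ − τ^j(ν)) = ∑_{j=0}^{N−1} g^{(j)}(ν)/(τ(λ) − τ^j(ν)) holds. -/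
open Matrix

noncomputable section

/-- The swap (permutation) matrix `P : P(u ⊗ v) = v ⊗ u`. -/
def Pmat (n : ℕ) : Matrix (Fin n × Fin n) (Fin n × Fin n) ℂ :=
  Matrix.of fun i j => if i.1 = j.2 ∧ i.2 = j.1 then 1 else 0

/-- For the rational `r`-matrix `r(λ,μ) = P/(λ-μ)` and `k = 1`, the `N`-reflection
equation at `(λ,ν)` is equivalent to the scalar functional equation
`∑_j g⁽ʲ⁾(ν)/(λ - τʲ(ν)) = ∑_j g⁽ʲ⁾(ν)/(τ(λ) - τʲ(ν))`. -/
theorem stmt8 (n N : ℕ) (hn : 1 ≤ n) (hN : 1 ≤ N)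
    (τ : ℂ → ℂ) (g : ℕ → ℂ → ℂ) (hg0 : ∀ ν : ℂ, g 0 ν = 1)
    (lam ν : ℂ)
    (h1 : ∀ j : ℕ, j < N → lam ≠ τ^[j] ν)
    (h2 : ∀ j : ℕ, j < N → τ lam ≠ τ^[j] ν) :
    ((∑ j ∈ Finset.range N, g j ν • ((lam - τ^[j] ν)⁻¹ • Pmat n))
        = ∑ j ∈ Finset.range N, g j ν • ((τ lam - τ^[j] ν)⁻¹ • Pmat n)) ↔
      (∑ j ∈ Finset.range N, g j ν / (lam - τ^[j] ν)
        = ∑ j ∈ Finset.range N, g j ν / (τ lam - τ^[j] ν)) := by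
  have key : ∀ c : ℂ → ℂ,
      (∑ j ∈ Finset.range N, g j ν • ((c (τ^[j] ν))⁻¹ • Pmat n))
        = (∑ j ∈ Finset.range N, g j ν / (c (τ^[j] ν))) • Pmat n := by
    intro c
    rw [Finset.sum_smul]
    refine Finset.sum_congr rfl fun j _ => ?_
    rw [smul_smul, div_eq_mul_inv]
  rw [key (fun x => lam - x), key (fun x => τ lam - x)]
  constructor
  · intro h
    let i0 : Fin n := ⟨0, hn⟩
    have := congrFun (congrFun h (i0, i0)) (i0, i0)
    simpa [Pmat, Matrix.smul_apply] using this
  · intro h; rw [h]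
end
end

section
/- Let a, b, c ∈ ℂ with a² + bc ≠ 0, define the Möbius map τ(ν) = (aν + b)/(cν − a) and g^{(1)}(ν) = −(a² + bc)/(a − cν)². Then: (i) for every ν with cν ≠ a and cτ(ν) ≠ a, τ(τ(ν)) = ν; and (ii) for all λ, ν ∈ ℂ such that cλ ≠ a, cν ≠ a, λ ≠ ν, λ ≠ τ(ν), τ(λ) ≠ ν and τ(λ) ≠ τ(ν): 1/(λ − ν) + g^{(1)}(ν)/(λ − τ(ν)) = 1/(τ(λ) − ν) + g^{(1)}(ν)/(τ(λ) − τ(ν)). (This is the statement that the identity matrix solves the 2-reflection equation for the rational r-matrix with this τ and g^{(1)}.) -/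
noncomputable section

/-- The Möbius map `τ(ν) = (aν + b)/(cν - a)`. -/
def tauR (a b c ν : ℂ) : ℂ := (a * ν + b) / (c * ν - a)

/-- `g⁽¹⁾(ν) = -(a² + bc)/(a - cν)²`. -/
def g1R (a b c ν : ℂ) : ℂ := -(a ^ 2 + b * c) / (a - c * ν) ^ 2

/-- The identity matrix solves the 2-reflection equation for the rational `r`-matrix
with `τ(ν) = (aν+b)/(cν-a)` and `g⁽¹⁾(ν) = -(a²+bc)/(a-cν)²`: `τ` is an involution and
the scalar functional equation holds. -/
theorem stmt9 (a b c : ℂ) (habc : a ^ 2 + b * c ≠ 0) :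
    (∀ ν : ℂ, c * ν ≠ a → c * tauR a b c ν ≠ a → tauR a b c (tauR a b c ν) = ν) ∧
    (∀ lam ν : ℂ, c * lam ≠ a → c * ν ≠ a → lam ≠ ν → lam ≠ tauR a b c ν →
      tauR a b c lam ≠ ν → tauR a b c lam ≠ tauR a b c ν →
      1 / (lam - ν) + g1R a b c ν / (lam - tauR a b c ν)
        = 1 / (tauR a b c lam - ν) + g1R a b c ν / (tauR a b c lam - tauR a b c ν)) := by
  constructor
  · intro ν h1 h2
    have d1 : c * ν - a ≠ 0 := sub_ne_zero.mpr h1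
    have d2 : c * tauR a b c ν - a ≠ 0 := sub_ne_zero.mpr h2
    simp only [tauR] at d2 ⊢
    field_simp at d2 ⊢
    rw [div_eq_iff (by intro h; apply habc; linear_combination h)]
    ring
  · intro lam ν hl hn hln hlt htn htt
    have d1 : c * lam - a ≠ 0 := sub_ne_zero.mpr hl
    have d2 : c * ν - a ≠ 0 := sub_ne_zero.mpr hn
    have e1 : lam - ν ≠ 0 := sub_ne_zero.mpr hln
    have e2 : lam - tauR a b c ν ≠ 0 := sub_ne_zero.mpr hlt
    have e3 : tauR a b c lam - ν ≠ 0 := sub_ne_zero.mpr htn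
    have e4 : tauR a b c lam - tauR a b c ν ≠ 0 := sub_ne_zero.mpr htt
    have h2 : lam - tauR a b c ν = (lam * (c * ν - a) - (a * ν + b)) / (c * ν - a) := by
      rw [tauR, sub_div' d2]
    have h3 : tauR a b c lam - ν = (a * lam + b - ν * (c * lam - a)) / (c * lam - a) := by
      rw [tauR, div_sub' d1]; ring
    have h4 : tauR a b c lam - tauR a b c ν
        = ((a * lam + b) * (c * ν - a) - (a * ν + b) * (c * lam - a))
          / ((c * lam - a) * (c * ν - a)) := by
      simp only [tauR]; rw [div_sub_div _ _ d1 d2]; ring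
    have p2 : lam * (c * ν - a) - (a * ν + b) ≠ 0 := by
      intro h; apply e2; rw [h2, h, zero_div]
    have p3 : a * lam + b - ν * (c * lam - a) ≠ 0 := by
      intro h; apply e3; rw [h3, h, zero_div]
    have p4 : (a * lam + b) * (c * ν - a) - (a * ν + b) * (c * lam - a) ≠ 0 := by
      intro h; apply e4; rw [h4, h, zero_div]
    have d3 : a - c * ν ≠ 0 := fun h => d2 (by linear_combination -h)
    rw [h2, h3, h4, g1R]
    rw [one_div_div, div_div_eq_mul_div, div_div_eq_mul_div, div_add_div _ _ e1 p2, div_add_div _ _ p3 p4, div_eq_div_iff (mul_ne_zero e1 p2) (mul_ne_zero p3 p4)]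
    field_simp
    ring
end
end

section
/- Let a, b, c, d ∈ ℂ satisfy a² + ad + bc + d² = 0 and ad − bc ≠ 0. Define τ(ν) = (aν + b)/(cν + d), g^{(1)}(ν) = (ad − bc)/(d + cν)² and g^{(2)}(ν) = (ad − bc)/(a − cν)². Then: (i) τ³(ν) = ν wherever defined (in particular τ²(ν) = (dν − b)/(−cν + a)); and (ii) for all λ, ν at which all the following denominators are nonzero: 1/(λ − ν) + g^{(1)}(ν)/(λ − τ(ν)) + g^{(2)}(ν)/(λ − τ²(ν)) = 1/(τ(λ) − ν) + g^{(1)}(ν)/(τ(λ) − τ(ν)) + g^{(2)}(ν)/(τ(λ) − τ²(ν)). (This is the statement that the identity matrix solves the 3-reflection equation for the rational r-matrix with this τ and these g^{(j)}.) -/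
noncomputable section

/-- The Möbius map `τ(ν) = (aν + b)/(cν + d)`. -/
def tauM (a b c d ν : ℂ) : ℂ := (a * ν + b) / (c * ν + d)

/-- `g⁽¹⁾(ν) = (ad - bc)/(d + cν)²`. -/
def g1M (a b c d ν : ℂ) : ℂ := (a * d - b * c) / (d + c * ν) ^ 2

/-- `g⁽²⁾(ν) = (ad - bc)/(a - cν)²`. -/
def g2M (a b c d ν : ℂ) : ℂ := (a * d - b * c) / (a - c * ν) ^ 2

set_option maxHeartbeats 4000000 in
set_option maxRecDepth 8000 in
/-- The identity matrix solves the 3-reflection equation for the rational `r`-matrix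
with `τ(ν) = (aν+b)/(cν+d)` subject to `a² + ad + bc + d² = 0`: `τ` has order 3
(with `τ²(ν) = (dν-b)/(-cν+a)`) and the scalar functional equation holds. -/
theorem stmt10 (a b c d : ℂ) (hconstr : a ^ 2 + a * d + b * c + d ^ 2 = 0)
    (hdet : a * d - b * c ≠ 0) :
    (∀ ν : ℂ, c * ν + d ≠ 0 → c * tauM a b c d ν + d ≠ 0 → a - c * ν ≠ 0 →
      tauM a b c d (tauM a b c d ν) = (d * ν - b) / (-c * ν + a) ∧
      (c * tauM a b c d (tauM a b c d ν) + d ≠ 0 →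
        tauM a b c d (tauM a b c d (tauM a b c d ν)) = ν)) ∧
    (∀ lam ν : ℂ, c * ν + d ≠ 0 → c * lam + d ≠ 0 → c * tauM a b c d ν + d ≠ 0 →
      a - c * ν ≠ 0 →
      lam ≠ ν → lam ≠ tauM a b c d ν → lam ≠ tauM a b c d (tauM a b c d ν) →
      tauM a b c d lam ≠ ν → tauM a b c d lam ≠ tauM a b c d ν →
      tauM a b c d lam ≠ tauM a b c d (tauM a b c d ν) →
      1 / (lam - ν) + g1M a b c d ν / (lam - tauM a b c d ν)
          + g2M a b c d ν / (lam - tauM a b c d (tauM a b c d ν))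
        = 1 / (tauM a b c d lam - ν) + g1M a b c d ν / (tauM a b c d lam - tauM a b c d ν)
          + g2M a b c d ν / (tauM a b c d lam - tauM a b c d (tauM a b c d ν))) := by
  have key : ∀ ν : ℂ, c * ν + d ≠ 0 → c * tauM a b c d ν + d ≠ 0 → a - c * ν ≠ 0 →
      tauM a b c d (tauM a b c d ν) = (d * ν - b) / (-c * ν + a) := by
    intro ν hν hτν hac
    unfold tauM at *
    have hac' : -(c * ν) + a ≠ 0 := by intro h; exact hac (by linear_combination h)
    have h2 : c * (a * ν + b) + d * (c * ν + d) ≠ 0 := by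
      intro h; apply hτν; field_simp; linear_combination h
    field_simp
    have hν2 : ν * c + d ≠ 0 := by rw [mul_comm]; exact hν
    have h2' : (a * ν + b) * c / (ν * c + d) + d ≠ 0 := by
      rw [div_add' _ _ _ hν2, div_ne_zero_iff]
      exact ⟨by intro h; exact h2 (by linear_combination h), hν2⟩
    rw [div_eq_div_iff h2' (by intro h; exact hac (by linear_combination h))]
    field_simp
    linear_combination (a*ν + b - c*ν^2 - d*ν) * hconstr
  constructor
  · intro ν hν hτν hac
    have hk := key ν hν hτν hac
    refine ⟨hk, ?_⟩
    intro h3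
    rw [hk] at h3 ⊢
    have hac' : -(c * ν) + a ≠ 0 := by intro h; exact hac (by linear_combination h)
    have h4 : c * (d * ν - b) + d * (-(c * ν) + a) ≠ 0 := by
      intro h; exact hdet (by linear_combination h)
    have hacn : -c * ν + a ≠ 0 := by intro h; exact hac (by linear_combination h)
    unfold tauM
    rw [div_eq_iff h3]
    linear_combination (div_mul_cancel₀ (d * ν - b) hacn)
  · intro lam ν hν hw hτν hac hlν hlT1 hlT2 hτlν hτlT1 hτlT2
    have hk := key ν hν hτν hac
    rw [hk] at hlT2 hτlT2 ⊢
    have hac' : -(c * ν) + a ≠ 0 := by intro h; exact hac (by linear_combination h)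
    have hu' : d + c * ν ≠ 0 := by intro h; exact hν (by linear_combination h)
    have hs : a + d ≠ 0 := by
      intro h; exact hdet (by linear_combination (a + d) * h - hconstr)
    have hP : lam - ν ≠ 0 := sub_ne_zero.mpr hlν
    have hQ : lam * (c * ν + d) - (a * ν + b) ≠ 0 := by
      intro h; apply hlT1; unfold tauM; rw [eq_div_iff hν]; linear_combination h
    have hacn : -c * ν + a ≠ 0 := by intro h; exact hac (by linear_combination h)
    have hR : lam * (-(c * ν) + a) - (d * ν - b) ≠ 0 := by
      intro h; apply hlT2; rw [eq_div_iff hacn]; linear_combination h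
    have h5 : (a * lam + b) - ν * (c * lam + d) ≠ 0 := by
      intro h; apply hτlν; unfold tauM; rw [div_eq_iff hw]; linear_combination h
    have h6 : (a * lam + b) * (c * ν + d) - (a * ν + b) * (c * lam + d) ≠ 0 := by
      intro h; apply hτlT1; unfold tauM; rw [div_eq_div_iff hw hν]; linear_combination h
    have h7 : (a * lam + b) * (-(c * ν) + a) - (d * ν - b) * (c * lam + d) ≠ 0 := by
      intro h; apply hτlT2; unfold tauM; rw [div_eq_div_iff hw hacn]; linear_combination h
    have h5' : a * lam + b - (c * lam + d) * ν ≠ 0 := by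
      intro h; exact h5 (by linear_combination h)
    have h6' : (a * lam + b) * (c * ν + d) - (c * lam + d) * (a * ν + b) ≠ 0 := by
      intro h; exact h6 (by linear_combination h)
    have h7' : (a * lam + b) * (-(c * ν) + a) - (c * lam + d) * (d * ν - b) ≠ 0 := by
      intro h; exact h7 (by linear_combination h)
    have e2 : g1M a b c d ν / (lam - tauM a b c d ν)
        = (a * d - b * c) / ((c * ν + d) * (lam * (c * ν + d) - (a * ν + b))) := by
      unfold tauM g1M
      rw [eq_div_iff (mul_ne_zero hν hQ)]
      field_simp
      ring
    have e3 : g2M a b c d ν / (lam - (d * ν - b) / (-c * ν + a))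
        = (a * d - b * c) / ((a - c * ν) * (lam * (-(c * ν) + a) - (d * ν - b))) := by
      unfold g2M
      rw [eq_div_iff (mul_ne_zero hac hR)]
      field_simp
      ring
    have e4 : 1 / (tauM a b c d lam - ν)
        = (c * lam + d) / (lam * (-(c * ν) + a) - (d * ν - b)) := by
      unfold tauM
      rw [eq_div_iff hR]
      have h5'' : (a * lam + b) / (c * lam + d) - ν ≠ 0 := by rw [sub_ne_zero]; exact hτlν
      rw [div_mul_eq_mul_div, one_mul, div_eq_iff h5'']
      have hw2 : lam * c + d ≠ 0 := by rw [mul_comm]; exact hw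
      field_simp
      ring
    have e5 : g1M a b c d ν / (tauM a b c d lam - tauM a b c d ν)
        = (c * lam + d) / ((c * ν + d) * (lam - ν)) := by
      unfold tauM g1M
      rw [eq_div_iff (mul_ne_zero hν hP)]
      field_simp
      ring
    have e6 : g2M a b c d ν / (tauM a b c d lam - (d * ν - b) / (-c * ν + a))
        = -((a * d - b * c) * (c * lam + d))
          / ((a + d) * ((a - c * ν) * (lam * (c * ν + d) - (a * ν + b)))) := by
      unfold tauM g2M
      rw [eq_div_iff (mul_ne_zero hs (mul_ne_zero hac hQ))]
      field_simp
      linear_combination (a - c*ν)*(lam - ν) * hconstr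
    rw [e2, e3, e4, e5, e6]
    have hν2 : ν * c + d ≠ 0 := by intro h; exact hν (by linear_combination h)
    have hQ2 : lam * (ν * c + d) - (ν * a + b) ≠ 0 := by intro h; exact hQ (by linear_combination h)
    have hac2 : a - ν * c ≠ 0 := by intro h; exact hac (by linear_combination h)
    have hR2 : lam * (-(ν * c) + a) - (ν * d - b) ≠ 0 := by intro h; exact hR (by linear_combination h)
    field_simp
    linear_combination (c*d^2*ν*lam^2 + -1*c*d^2*ν^2*lam + c^2*d*ν*lam^3 + -1*c^2*d*ν^3*lam + c^3*ν^2*lam^3 + -1*c^3*ν^3*lam^2 + -1*b*c*d*lam^2 + b*c*d*ν*lam + -1*b*c^2*ν*lam^2 + b*c^2*ν^2*lam + -1*a*d^2*ν*lam + a*d^2*ν^2 + -1*a*c*d*lam^3 + a*c*d*ν^3 + -1*a*c^2*ν*lam^3 + a*c^2*ν^3*lam + a*b*d*lam + -1*a*b*d*ν + a*b*c*ν*lam + -1*a*b*c*ν^2 + a^2*d*lam^2 + -1*a^2*d*ν*lam + a^2*c*ν*lam^2 + -1*a^2*c*ν^2*lam) * hconstr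
end
end

section
/- Let a, b, c ∈ ℂ with c ≠ 0 and a² + bc ≠ 0, and define p(μ) = (b + cμ²)/(2c(a − cμ)). Then for all λ, μ ∈ ℂ such that λ ≠ μ, a − cλ ≠ 0, a − cμ ≠ 0, b + a(λ + μ) − cλμ ≠ 0 and p(λ) ≠ p(μ): 1/(λ − μ) − (a² + bc)/((a − cμ)(b + a(λ + μ) − cλμ)) = ((b + 2aμ − cμ²)/(2(a − cμ)²)) · (1/(p(λ) − p(μ))). (This expresses the non-skew-symmetric r-matrix r̄(λ,μ) = P·[1/(λ−μ) − (a²+bc)/((a−cμ)(b+a(λ+μ)−cλμ))], obtained from the 2-reflection equation solution with k = 1, as a rescaling and reparametrization of the rational r-matrix r(x) = P/x.) -/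
noncomputable section

/-- The reparametrization `p(μ) = (b + cμ²)/(2c(a - cμ))`. -/
def pRep (a b c mu : ℂ) : ℂ := (b + c * mu ^ 2) / (2 * c * (a - c * mu))

/-- The non-skew-symmetric `r`-matrix obtained from the 2-reflection equation with
`k = 1` is a rescaling and reparametrization of the rational `r`-matrix: the scalar
identity `1/(λ-μ) - (a²+bc)/((a-cμ)(b+a(λ+μ)-cλμ))
  = ((b+2aμ-cμ²)/(2(a-cμ)²)) · 1/(p(λ)-p(μ))`. -/
theorem stmt18 (a b c : ℂ) (hc : c ≠ 0) (habc : a ^ 2 + b * c ≠ 0)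
    (lam mu : ℂ) (h1 : lam ≠ mu) (h2 : a - c * lam ≠ 0) (h3 : a - c * mu ≠ 0)
    (h4 : b + a * (lam + mu) - c * lam * mu ≠ 0)
    (h5 : pRep a b c lam ≠ pRep a b c mu) :
    1 / (lam - mu) - (a ^ 2 + b * c) / ((a - c * mu) * (b + a * (lam + mu) - c * lam * mu))
      = ((b + 2 * a * mu - c * mu ^ 2) / (2 * (a - c * mu) ^ 2))
          * (1 / (pRep a b c lam - pRep a b c mu)) := by
  have hlm : lam - mu ≠ 0 := sub_ne_zero.mpr h1
  have key : pRep a b c lam - pRep a b c mu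
      = (lam - mu) * (b + a * (lam + mu) - c * lam * mu)
        / (2 * (a - c * lam) * (a - c * mu)) := by
    unfold pRep
    field_simp
    ring
  rw [key]
  field_simp
  have h' : (a - mu * c) * (b + a * (lam + mu) - lam * mu * c) ≠ 0 := by
    rw [mul_comm mu c, mul_right_comm lam mu c, mul_comm lam c]; exact mul_ne_zero h3 h4
  rw [eq_div_iff h', sub_mul, div_mul_cancel₀ _ h']
  ring
end
end
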